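/- Let p > q ≥ 1 be coprime integers, and suppose p/q = [a_1,…,a_n] and p/(p−q) = [b_1,…,b_m] with all a_i ≥ 2, all b_j ≥ 2, and m ≥ 2. Then for every null sequence (n_1,…,n_m) of length m, one has (b_1 − n_1) + (b_2 − n_2) + ⋯ + (b_m − n_m) ≤ n + 1, with equality if and only if (n_1,…,n_m) = (1,2,…,2,1) (i.e. n_1 = n_m = 1 and n_i = 2 for 1 < i < m). -/

import Mathlib

/-- `l'` is a strict blowup of `l`: either an interior blowup
`(n₁,…,n_{s−1}, n_s+1, 1, n_{s+1}+1, n_{s+2},…,n_k)` for some `1 ≤ s ≤ k−1`,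
or the end blowup `(n₁,…,n_{k−1}, n_k+1, 1)`. -/
def IsStrictBlowup (l l' : List ℤ) : Prop :=
  (∃ (A B : List ℤ) (a b : ℤ), l = A ++ a :: b :: B ∧
      l' = A ++ (a + 1) :: 1 :: (b + 1) :: B) ∨
  (∃ (A : List ℤ) (a : ℤ), l = A ++ [a] ∧ l' = A ++ [a + 1, 1])

/-- A null sequence is a finite integer sequence obtained from the one-term
sequence `(0)` by finitely many strict blowups. -/
def IsNullSeq (l : List ℤ) : Prop :=
  Relation.ReflTransGen IsStrictBlowup [0] l

/-- Hirzebruch–Jung continued fraction `[x₁,…,x_r] = x₁ − 1/(x₂ − 1/(⋯ − 1/x_r))`. -/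
def hjCF : List ℤ → ℚ
  | [] => 0
  | a :: l => (a : ℚ) - 1 / hjCF l

lemma hjCF_nil : hjCF [] = 0 := rfl
lemma hjCF_cons (x : ℤ) (l : List ℤ) : hjCF (x :: l) = (x:ℚ) - 1 / hjCF l := rfl
lemma hjCF_singleton (x : ℤ) : hjCF [x] = x := by simp [hjCF]

lemma hjCF_gt_one : ∀ {l : List ℤ}, l ≠ [] → (∀ x ∈ l, 2 ≤ x) → 1 < hjCF l := by
  intro l
  induction l with
  | nil => intro h; exact absurd rfl h
  | cons x t ih =>
    intro _ h2
    have hx : (2:ℚ) ≤ (x:ℚ) := by exact_mod_cast h2 x List.mem_cons_self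
    rcases eq_or_ne t [] with rfl | ht
    · rw [hjCF_singleton]; linarith
    · have h1 : 1 < hjCF t := ih ht (fun y hy => h2 y (List.mem_cons_of_mem _ hy))
      have h0 : 0 < hjCF t := by linarith
      have hlt : 1 / hjCF t < 1 := by rw [div_lt_one h0]; linarith
      rw [hjCF_cons]; linarith

lemma hjCF_head_bounds {x : ℤ} {t : List ℤ} (h2 : ∀ y ∈ x :: t, 2 ≤ y) :
    hjCF (x :: t) ≤ x ∧ ((x:ℚ) - 1 < hjCF (x :: t)) ∧ (t ≠ [] → hjCF (x :: t) < x) := by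
  rcases eq_or_ne t [] with rfl | ht
  · rw [hjCF_singleton]
    exact ⟨le_refl _, by linarith, fun h => absurd rfl h⟩
  · have h1 : 1 < hjCF t := hjCF_gt_one ht (fun y hy => h2 y (List.mem_cons_of_mem _ hy))
    have h0 : 0 < hjCF t := by linarith
    have hpos : 0 < 1 / hjCF t := by positivity
    have hlt : 1 / hjCF t < 1 := by rw [div_lt_one h0]; linarith
    rw [hjCF_cons]
    exact ⟨by linarith, by linarith, fun _ => by linarith⟩

/-- Riemenschneider duality: if `p/q = hjCF A` and `p/(p-q) = hjCF B` with all
entries at least 2, then `B.sum = 2 * B.length + A.length - 1`. -/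
lemma key_duality : ∀ p q : ℕ, ∀ A B : List ℤ, 1 ≤ q → q < p → Nat.Coprime p q →
    (∀ x ∈ A, 2 ≤ x) → (∀ x ∈ B, 2 ≤ x) →
    (p:ℚ)/(q:ℚ) = hjCF A → (p:ℚ)/((p:ℚ)-(q:ℚ)) = hjCF B →
    B.sum = 2 * B.length + A.length - 1 := by
  intro p
  induction p using Nat.strong_induction_on with
  | _ p ih =>
  intro q A B hq hqp hcop hA hB hAv hBv
  have hq0 : (0:ℚ) < q := by exact_mod_cast hq
  have hpqQ : (q:ℚ) < p := by exact_mod_cast hqp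
  have hp0 : (0:ℚ) < p := by linarith
  have hpm : (0:ℚ) < (p:ℚ) - q := by linarith
  have hvalA : 1 < (p:ℚ)/q := (one_lt_div hq0).2 hpqQ
  have hvalB : 1 < (p:ℚ)/((p:ℚ)-q) := (one_lt_div hpm).2 (by linarith)
  obtain ⟨a₁, A', rfl⟩ : ∃ a A', A = a :: A' := by
    cases A with
    | nil => rw [hjCF_nil] at hAv; exfalso; rw [hAv] at hvalA; linarith
    | cons x t => exact ⟨x, t, rfl⟩
  obtain ⟨b₁, B', rfl⟩ : ∃ b B', B = b :: B' := by
    cases B with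
    | nil => rw [hjCF_nil] at hBv; exfalso; rw [hBv] at hvalB; linarith
    | cons x t => exact ⟨x, t, rfl⟩
  obtain ⟨hAle, hAgt, hAlt⟩ := hjCF_head_bounds hA
  obtain ⟨hBle, hBgt, hBlt⟩ := hjCF_head_bounds hB
  have ha₁2 : 2 ≤ a₁ := hA a₁ List.mem_cons_self
  have hb₁2 : 2 ≤ b₁ := hB b₁ List.mem_cons_self
  rcases lt_trichotomy (2*q) p with hlt | heq | hgt
  · -- 2q < p : reduce to (p-q, q), A ↦ (a₁-1)::A', B ↦ B'
    have h2qQ : (2*q:ℚ) < p := by exact_mod_cast hlt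
    have hvB2 : (p:ℚ)/((p:ℚ)-q) < 2 := by rw [div_lt_iff₀ hpm]; linarith
    have hb₁ : b₁ = 2 := by
      have h1 : (b₁:ℚ) - 1 < 2 := by rw [hBv] at hvB2; linarith
      have : b₁ < 3 := by exact_mod_cast (by linarith : (b₁:ℚ) < 3)
      omega
    subst hb₁
    have hB'ne : B' ≠ [] := by
      intro h; subst h
      rw [hjCF_singleton] at hBv; rw [hBv] at hvB2; norm_num at hvB2
    have hB'1 : 1 < hjCF B' := hjCF_gt_one hB'ne (fun y hy => hB y (List.mem_cons_of_mem _ hy))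
    have hB'0 : hjCF B' ≠ 0 := by linarith
    have hvA2 : 2 < (p:ℚ)/q := by rw [lt_div_iff₀ hq0]; linarith
    have ha₁3 : 3 ≤ a₁ := by
      have h1 : (2:ℚ) < a₁ := by rw [hAv] at hvA2; linarith
      have : 2 < a₁ := by exact_mod_cast h1
      omega
    have hp2q : (0:ℚ) < (p:ℚ) - 2*q := by linarith
    have hB'v : ((p:ℚ)-q)/((p:ℚ)-2*q) = hjCF B' := by
      rw [hjCF_cons] at hBv
      rw [eq_comm, eq_div_iff (by linarith)]
      field_simp at hBv
      push_cast at hBv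
      nlinarith [hBv]
    have hA2v : ((p:ℚ)-q)/q = hjCF ((a₁-1) :: A') := by
      rw [hjCF_cons]
      have h1 : ((p:ℚ)-q)/q = (p:ℚ)/q - 1 := by field_simp
      rw [h1, hAv, hjCF_cons]; push_cast; ring
    have hcop' : Nat.Coprime (p-q) q := by
      have h3 : Nat.gcd (p-q) q ∣ p := by
        have h1 := Nat.gcd_dvd_left (p-q) q
        have h2 := Nat.gcd_dvd_right (p-q) q
        have h4 := Nat.dvd_add h1 h2
        rwa [Nat.sub_add_cancel hqp.le] at h4
      exact Nat.dvd_one.mp (hcop ▸ Nat.dvd_gcd h3 (Nat.gcd_dvd_right _ _))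
    have hcast : ((p - q : ℕ) : ℚ) = (p:ℚ) - q := by
      push_cast [Nat.cast_sub hqp.le]; ring
    have hrec := ih (p-q) (by omega) q ((a₁-1) :: A') B' hq (by omega) hcop'
      (by intro y hy
          rcases List.mem_cons.mp hy with rfl | hy'
          · omega
          · exact hA y (List.mem_cons_of_mem _ hy'))
      (fun y hy => hB y (List.mem_cons_of_mem _ hy))
      (by rw [hcast]; exact hA2v)
      (by rw [hcast]
          have he : (p:ℚ) - q - q = (p:ℚ) - 2*q := by ring
          rw [he]; exact hB'v)
    simp only [List.sum_cons, List.length_cons] at hrec ⊢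
    push_cast at hrec ⊢
    linarith
  · -- p = 2q : then q = 1, p = 2, A = [2], B = [2]
    have hq1 : q = 1 := by
      have hdvd : q ∣ p := ⟨2, by omega⟩
      have := Nat.dvd_gcd hdvd dvd_rfl
      rw [hcop] at this
      exact Nat.dvd_one.mp this
    have hp2 : p = 2 := by omega
    subst hq1 hp2
    have hv2 : hjCF (a₁ :: A') = 2 := by rw [← hAv]; norm_num
    have hvB2 : hjCF (b₁ :: B') = 2 := by rw [← hBv]; norm_num
    have hA'nil : A' = [] := by
      by_contra h
      have := hAlt h
      rw [hv2] at this hAgt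
      have h1 : 2 < (a₁:ℚ) := this
      have h2 : (a₁:ℚ) < 3 := by linarith
      have h3 : 2 < a₁ := by exact_mod_cast h1
      have h4 : a₁ < 3 := by exact_mod_cast h2
      omega
    have hB'nil : B' = [] := by
      by_contra h
      have := hBlt h
      rw [hvB2] at this hBgt
      have h1 : 2 < (b₁:ℚ) := this
      have h2 : (b₁:ℚ) < 3 := by linarith
      have h3 : 2 < b₁ := by exact_mod_cast h1
      have h4 : b₁ < 3 := by exact_mod_cast h2
      omega
    subst hA'nil hB'nil
    rw [hjCF_singleton] at hvB2
    have : b₁ = 2 := by exact_mod_cast hvB2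
    subst this
    simp
  · -- 2q > p : reduce to (q, 2q-p), A ↦ A', B ↦ (b₁-1)::B'
    have h2qQ : (p:ℚ) < 2*q := by exact_mod_cast hgt
    have hvA2 : (p:ℚ)/q < 2 := by rw [div_lt_iff₀ hq0]; linarith
    have ha₁ : a₁ = 2 := by
      have h1 : (a₁:ℚ) - 1 < 2 := by rw [hAv] at hvA2; linarith
      have : a₁ < 3 := by exact_mod_cast (by linarith : (a₁:ℚ) < 3)
      omega
    subst ha₁
    have hA'ne : A' ≠ [] := by
      intro h; subst h
      rw [hjCF_singleton] at hAv; rw [hAv] at hvA2; norm_num at hvA2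
    have hA'1 : 1 < hjCF A' := hjCF_gt_one hA'ne (fun y hy => hA y (List.mem_cons_of_mem _ hy))
    have hA'0 : hjCF A' ≠ 0 := by linarith
    have hvB2 : 2 < (p:ℚ)/((p:ℚ)-q) := by rw [lt_div_iff₀ hpm]; linarith
    have hb₁3 : 3 ≤ b₁ := by
      have h1 : (2:ℚ) < b₁ := by rw [hBv] at hvB2; linarith
      have : 2 < b₁ := by exact_mod_cast h1
      omega
    have h2qp : (0:ℚ) < 2*(q:ℚ) - p := by linarith
    have hA'v : (q:ℚ)/(2*(q:ℚ)-p) = hjCF A' := by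
      rw [hjCF_cons] at hAv
      rw [eq_comm, eq_div_iff (by linarith)]
      field_simp at hAv
      push_cast at hAv
      nlinarith [hAv]
    have hB2v : (q:ℚ)/((p:ℚ)-q) = hjCF ((b₁-1) :: B') := by
      rw [hjCF_cons]
      have h1 : (q:ℚ)/((p:ℚ)-q) = (p:ℚ)/((p:ℚ)-q) - 1 := by field_simp; ring
      rw [h1, hBv, hjCF_cons]; push_cast; ring
    have hcop' : Nat.Coprime q (2*q-p) := by
      have h3 : Nat.gcd q (2*q-p) ∣ p := by
        have h1 := Nat.gcd_dvd_left q (2*q-p)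
        have h2 := Nat.gcd_dvd_right q (2*q-p)
        have h4 := Nat.dvd_sub (Dvd.dvd.mul_left h1 2) h2
        rwa [show 2*q - (2*q-p) = p by omega] at h4
      exact Nat.dvd_one.mp (hcop ▸ Nat.dvd_gcd h3 (Nat.gcd_dvd_left _ _))
    have hcast : ((2*q - p : ℕ) : ℚ) = 2*(q:ℚ) - p := by
      push_cast [Nat.cast_sub hgt.le]; ring
    have hrec := ih q hqp (2*q-p) A' ((b₁-1) :: B') (by omega) (by omega) hcop'
      (fun y hy => hA y (List.mem_cons_of_mem _ hy))
      (by intro y hy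
          rcases List.mem_cons.mp hy with rfl | hy'
          · omega
          · exact hB y (List.mem_cons_of_mem _ hy'))
      (by rw [hcast]; exact hA'v)
      (by rw [hcast]
          have he : (q:ℚ) - (2*(q:ℚ) - p) = (p:ℚ) - q := by ring
          rw [he]; exact hB2v)
    simp only [List.sum_cons, List.length_cons] at hrec ⊢
    push_cast at hrec ⊢
    linarith

lemma null_bound {u : List ℤ} (hu : IsNullSeq u) :
    2 * (u.length : ℤ) - 2 ≤ u.sum ∧
      (u.sum = 2 * (u.length : ℤ) - 2 →
        (u = [0] ∨ (2 ≤ u.length ∧ u = 1 :: (List.replicate (u.length - 2) (2:ℤ) ++ [1])))) := by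
  induction hu with
  | refl => exact ⟨by simp, fun _ => Or.inl rfl⟩
  | tail hstep hb ih =>
    obtain ⟨ihle, iheq⟩ := ih
    rcases hb with ⟨A, B, x, y, rfl, rfl⟩ | ⟨A, x, rfl, rfl⟩
    · -- interior blowup
      have hlen : ((A ++ (x + 1) :: 1 :: (y + 1) :: B).length : ℤ)
          = ((A ++ x :: y :: B).length : ℤ) + 1 := by simp; omega
      have hsum : (A ++ (x + 1) :: 1 :: (y + 1) :: B).sum = (A ++ x :: y :: B).sum + 3 := by
        simp [List.sum_append]; ring
      constructor
      · rw [hlen, hsum]; linarith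
      · intro h
        rw [hlen, hsum] at h
        exfalso; linarith
    · -- end blowup
      have hlen : ((A ++ [x + 1, 1]).length : ℤ) = ((A ++ [x]).length : ℤ) + 1 := by
        simp; omega
      have hsum : (A ++ [x + 1, 1]).sum = (A ++ [x]).sum + 2 := by
        simp [List.sum_append]; ring
      constructor
      · rw [hlen, hsum]; linarith
      · intro h
        rw [hlen, hsum] at h
        have heq : (A ++ [x]).sum = 2 * ((A ++ [x]).length : ℤ) - 2 := by linarith
        rcases iheq heq with h0 | ⟨hlen2, hform⟩
        · -- A ++ [x] = [0] : so A = [], x = 0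
          have hA : A = [] := by
            cases A with
            | nil => rfl
            | cons c t =>
              exfalso
              have hlc := congrArg List.length h0
              simp at hlc
          subst hA
          simp only [List.nil_append] at h0 ⊢
          have hx0 : x = 0 := by simpa using h0
          subst hx0
          right
          norm_num
        · -- A ++ [x] = 1 :: (replicate (k-2) 2 ++ [1])
          right
          set k := (A ++ [x]).length with hk
          have hre : A ++ [x] = (1 :: List.replicate (k - 2) (2:ℤ)) ++ [1] := by
            rw [hform]; simp
          obtain ⟨hA, hx⟩ := List.append_inj' hre rfl
          have hx1 : x = 1 := by simpa using hx
          subst hx1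
          have hlen3 : (A ++ [(1:ℤ) + 1, 1]).length = k + 1 := by
            rw [hA]; simp; omega
          refine ⟨by rw [hlen3]; omega, ?_⟩
          rw [hlen3, hA]
          have h2 : k + 1 - 2 = (k - 2) + 1 := by omega
          rw [h2, List.replicate_succ']
          simp

theorem stmt7 (p q : ℕ) (hq : 1 ≤ q) (hqp : q < p) (hpq : Nat.Coprime p q)
    (n m : ℕ) (hn : 1 ≤ n) (hm : 2 ≤ m)
    (a b : ℕ → ℤ) (ha : ∀ i < n, 2 ≤ a i) (hb : ∀ i < m, 2 ≤ b i)
    (hav : (p : ℚ) / q = hjCF ((List.range n).map fun i => a i))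
    (hbv : (p : ℚ) / ((p : ℚ) - q) = hjCF ((List.range m).map fun i => b i))
    (u : List ℤ) (hu : IsNullSeq u) (hul : u.length = m) :
    ((List.range m).map fun i => b i).sum - u.sum ≤ (n : ℤ) + 1 ∧
      (((List.range m).map fun i => b i).sum - u.sum = (n : ℤ) + 1 ↔
        u = 1 :: (List.replicate (m - 2) (2 : ℤ) ++ [1])) := by
  set A : List ℤ := (List.range n).map fun i => a i with hA
  set B : List ℤ := (List.range m).map fun i => b i with hB
  have hAmem : ∀ x ∈ A, 2 ≤ x := by
    intro x hx
    rw [hA, List.mem_map] at hx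
    obtain ⟨i, hi, rfl⟩ := hx
    exact ha i (List.mem_range.mp hi)
  have hBmem : ∀ x ∈ B, 2 ≤ x := by
    intro x hx
    rw [hB, List.mem_map] at hx
    obtain ⟨i, hi, rfl⟩ := hx
    exact hb i (List.mem_range.mp hi)
  have hBsum : B.sum = 2 * (m:ℤ) + n - 1 := by
    have h := key_duality p q A B hq hqp hpq hAmem hBmem hav hbv
    have hBl : B.length = m := by simp [hB]
    have hAl : A.length = n := by simp [hA]
    rw [hBl, hAl] at h
    exact h
  obtain ⟨hle, heq⟩ := null_bound hu
  rw [hul] at hle heq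
  constructor
  · linarith
  · constructor
    · intro h
      have hus : u.sum = 2 * (m:ℤ) - 2 := by linarith
      rcases heq hus with h0 | ⟨_, hform⟩
      · exfalso
        have : u.length = 1 := by rw [h0]; rfl
        omega
      · exact hform
    · intro h
      have hus : u.sum = 2 * (m:ℤ) - 2 := by
        rw [h]
        simp [List.sum_replicate]
        push_cast [Nat.cast_sub hm]
        ring
      linarith
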